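/- In the badcodeword construction: for every e ∈ C_max \ C, ⟨ψ2, XZ(e)ψ2⟩ = 0. -/

import Mathlib

open scoped BigOperators
open Matrix

/-- `omg p` is the complex primitive `p`-th root of unity `exp(2πi/p)`. -/
noncomputable def omg (p : ℕ) : ℂ := Complex.exp (2 * Real.pi * Complex.I / p)

/-- The generalized Pauli matrix `XZ(u) = X^{a_1}Z^{b_1} ⊗ ⋯ ⊗ X^{a_n}Z^{b_n}`
for `u = ((a_1,b_1),…,(a_n,b_n)) ∈ (Z_p²)ⁿ`, written out entrywise with respect to the
computational basis of `(ℂ^p)^{⊗n} ≃ ℂ^{p^n}`, whose coordinates are indexed by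
`Fin n → ZMod p`.  (It is the matrix determined by
`XZ(u) |i₁ … iₙ⟩ = ∏_t ω^{b_t i_t} |i₁+a₁, …, iₙ+aₙ⟩`.) -/
noncomputable def XZ (p n : ℕ) (u : Fin n → ZMod p × ZMod p) :
    Matrix (Fin n → ZMod p) (Fin n → ZMod p) ℂ :=
  fun j i => ∏ t : Fin n, if j t = i t + (u t).1 then omg p ^ ((u t).2 * i t).val else 0

/-- The symplectic inner product `⟨u,v⟩ = Σ b_i c_i − a_i d_i` on `Z_p^{2n}`. -/
def symp (p n : ℕ) (u v : Fin n → ZMod p × ZMod p) : ZMod p :=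
  ∑ t : Fin n, ((u t).2 * (v t).1 - (u t).1 * (v t).2)

/-- The standard Hermitian inner product on `I → ℂ`. -/
noncomputable def cinner {I : Type*} [Fintype I] (x y : I → ℂ) : ℂ :=
  ∑ i, (starRingEnd ℂ) (x i) * y i

section Chi

variable (p : ℕ) [Fact p.Prime]

lemma omg_ne_zero : omg p ≠ 0 := Complex.exp_ne_zero _

lemma omg_prim : IsPrimitiveRoot (omg p) p :=
  Complex.isPrimitiveRoot_exp p (Fact.out (p := p.Prime)).ne_zero

lemma omg_pow_p : omg p ^ p = 1 := (omg_prim p).pow_eq_one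

/-- `chi p m = ω^m` as an additive character of `ZMod p`. -/
noncomputable def chi (m : ZMod p) : ℂ := omg p ^ m.val

lemma omg_pow_mod (a : ℕ) : omg p ^ (a % p) = omg p ^ a := by
  conv_rhs => rw [← Nat.div_add_mod a p]
  rw [pow_add, pow_mul, omg_pow_p, one_pow, one_mul]

lemma chi_add (a b : ZMod p) : chi p (a + b) = chi p a * chi p b := by
  unfold chi
  rw [ZMod.val_add, omg_pow_mod, pow_add]

lemma chi_zero : chi p 0 = 1 := by simp [chi]

lemma chi_mul_neg (a : ZMod p) : chi p a * chi p (-a) = 1 := by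
  rw [← chi_add, add_neg_cancel, chi_zero]

lemma chi_ne_zero (a : ZMod p) : chi p a ≠ 0 := pow_ne_zero _ (omg_ne_zero p)

lemma chi_inv (a : ZMod p) : (chi p a)⁻¹ = chi p (-a) :=
  inv_eq_of_mul_eq_one_right (chi_mul_neg p a)

lemma conj_omg : (starRingEnd ℂ) (omg p) = (omg p)⁻¹ := by
  unfold omg
  rw [← Complex.exp_conj, ← Complex.exp_neg]
  congr 1
  simp only [map_div₀, _root_.map_mul, Complex.conj_I, Complex.conj_ofReal, map_ofNat,
    map_natCast]
  ring

lemma conj_chi (a : ZMod p) : (starRingEnd ℂ) (chi p a) = chi p (-a) := by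
  rw [← chi_inv]
  unfold chi
  rw [map_pow, conj_omg, inv_pow]

lemma conj_chi_mul (a : ZMod p) : (starRingEnd ℂ) (chi p a) * chi p a = 1 := by
  rw [conj_chi, mul_comm]; exact chi_mul_neg p a

lemma chi_eq_one_iff (a : ZMod p) : chi p a = 1 ↔ a = 0 := by
  unfold chi
  rw [(omg_prim p).pow_eq_one_iff_dvd]
  constructor
  · intro h
    exact (ZMod.val_eq_zero a).mp (Nat.eq_zero_of_dvd_of_lt h (ZMod.val_lt a))
  · intro h; rw [h]; simp

lemma chi_sum {ι : Type*} (s : Finset ι) (f : ι → ZMod p) :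
    (∏ i ∈ s, chi p (f i)) = chi p (∑ i ∈ s, f i) := by
  induction s using Finset.cons_induction with
  | empty => simp [chi_zero]
  | cons a s ha ih => rw [Finset.prod_cons, Finset.sum_cons, chi_add, ih]

end Chi

lemma myprod_ite_zero {ι : Type*} (s : Finset ι) (P : ι → Prop) [DecidablePred P] (f : ι → ℂ) :
    (∏ i ∈ s, if P i then f i else 0) = if ∀ i ∈ s, P i then ∏ i ∈ s, f i else 0 := by
  by_cases h : ∀ i ∈ s, P i
  · rw [if_pos h]; exact Finset.prod_congr rfl fun i hi => if_pos (h i hi)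
  · rw [if_neg h]
    push_neg at h
    obtain ⟨i, hi, hP⟩ := h
    exact Finset.prod_eq_zero hi (if_neg hP)

section Pauli

variable (p n : ℕ) [Fact p.Prime]

/-- first components -/
def Av (u : Fin n → ZMod p × ZMod p) : Fin n → ZMod p := fun t => (u t).1

/-- `∑ t, (u t).2 * i t` -/
def dotB (u : Fin n → ZMod p × ZMod p) (i : Fin n → ZMod p) : ZMod p :=
  ∑ t, (u t).2 * i t

/-- `∑ t, (u t).2 * (v t).1` -/
def Bf (u v : Fin n → ZMod p × ZMod p) : ZMod p := dotB p n u (Av p n v)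

variable {p n}

lemma Av_add (u v : Fin n → ZMod p × ZMod p) : Av p n (u + v) = Av p n u + Av p n v := rfl

lemma dotB_add_left (u v : Fin n → ZMod p × ZMod p) (i : Fin n → ZMod p) :
    dotB p n (u + v) i = dotB p n u i + dotB p n v i := by
  unfold dotB
  rw [← Finset.sum_add_distrib]
  exact Finset.sum_congr rfl fun t _ => by
    show ((u t + v t).2) * i t = _
    rw [Prod.snd_add, add_mul]

lemma dotB_add_right (u : Fin n → ZMod p × ZMod p) (i j : Fin n → ZMod p) :
    dotB p n u (i + j) = dotB p n u i + dotB p n u j := by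
  unfold dotB
  rw [← Finset.sum_add_distrib]
  exact Finset.sum_congr rfl fun t _ => by rw [Pi.add_apply, mul_add]

lemma dotB_sub_right (u : Fin n → ZMod p × ZMod p) (i j : Fin n → ZMod p) :
    dotB p n u (i - j) = dotB p n u i - dotB p n u j := by
  unfold dotB
  rw [← Finset.sum_sub_distrib]
  exact Finset.sum_congr rfl fun t _ => by rw [Pi.sub_apply, mul_sub]

lemma symp_eq_Bf (u v : Fin n → ZMod p × ZMod p) :
    symp p n u v = Bf p n u v - Bf p n v u := by
  unfold symp Bf dotB Av
  rw [← Finset.sum_sub_distrib]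
  exact Finset.sum_congr rfl fun t _ => by ring

lemma symp_skew (u v : Fin n → ZMod p × ZMod p) : symp p n u v = - symp p n v u := by
  rw [symp_eq_Bf, symp_eq_Bf]; ring

lemma symp_add_right (c x y : Fin n → ZMod p × ZMod p) :
    symp p n c (x + y) = symp p n c x + symp p n c y := by
  unfold symp
  rw [← Finset.sum_add_distrib]
  exact Finset.sum_congr rfl fun t _ => by
    show (c t).2 * ((x t + y t).1) - (c t).1 * ((x t + y t).2) = _
    rw [Prod.fst_add, Prod.snd_add]; ring

lemma symp_sub_right (c x y : Fin n → ZMod p × ZMod p) :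
    symp p n c (x - y) = symp p n c x - symp p n c y := by
  unfold symp
  rw [← Finset.sum_sub_distrib]
  exact Finset.sum_congr rfl fun t _ => by
    show (c t).2 * ((x t - y t).1) - (c t).1 * ((x t - y t).2) = _
    rw [Prod.fst_sub, Prod.snd_sub]; ring

lemma XZ_apply (u : Fin n → ZMod p × ZMod p) (j i : Fin n → ZMod p) :
    XZ p n u j i = if j = i + Av p n u then chi p (dotB p n u i) else 0 := by
  show (∏ t : Fin n, if j t = i t + (u t).1 then chi p ((u t).2 * i t) else 0) = _
  rw [myprod_ite_zero]
  have hcond : (∀ t ∈ Finset.univ, j t = i t + (u t).1) ↔ j = i + Av p n u := by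
    simp only [Finset.mem_univ, true_implies]
    exact (funext_iff).symm
  by_cases h : j = i + Av p n u
  · rw [if_pos (hcond.mpr h), if_pos h]
    exact chi_sum p Finset.univ _
  · rw [if_neg (fun hh => h (hcond.mp hh)), if_neg h]

lemma XZ_mulVec (u : Fin n → ZMod p × ZMod p) (ψ : (Fin n → ZMod p) → ℂ) :
    XZ p n u *ᵥ ψ = fun j => chi p (dotB p n u (j - Av p n u)) * ψ (j - Av p n u) := by
  funext j
  show (∑ i, XZ p n u j i * ψ i) = _
  rw [Finset.sum_eq_single (j - Av p n u)]
  · rw [XZ_apply, if_pos (by rw [sub_add_cancel])]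
  · intro i _ hne
    rw [XZ_apply, if_neg, zero_mul]
    intro h
    exact hne (eq_sub_of_add_eq h.symm)
  · intro h; exact absurd (Finset.mem_univ _) h

lemma XZ_XZ_mulVec (u v : Fin n → ZMod p × ZMod p) (ψ : (Fin n → ZMod p) → ℂ) :
    XZ p n u *ᵥ (XZ p n v *ᵥ ψ) = chi p (Bf p n u v) • (XZ p n (u + v) *ᵥ ψ) := by
  funext j
  simp only [XZ_mulVec, Pi.smul_apply, smul_eq_mul]
  have hA : j - Av p n u - Av p n v = j - Av p n (u + v) := by
    rw [Av_add, sub_sub]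
  rw [hA, ← mul_assoc, ← mul_assoc, ← chi_add, ← chi_add]
  congr 2
  unfold Bf
  rw [dotB_add_left, Av_add, dotB_sub_right, dotB_sub_right, dotB_sub_right, dotB_add_right,
    dotB_add_right]
  ring

lemma cinner_XZ_XZ (u : Fin n → ZMod p × ZMod p) (a w : (Fin n → ZMod p) → ℂ) :
    cinner (XZ p n u *ᵥ a) (XZ p n u *ᵥ w) = cinner a w := by
  unfold cinner
  simp only [XZ_mulVec]
  refine (Fintype.sum_equiv (Equiv.addRight (Av p n u)) _ _ fun i => ?_).symm
  simp only [Equiv.coe_addRight, add_sub_cancel_right, _root_.map_mul]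
  have h1 := conj_chi_mul p (dotB p n u i)
  linear_combination (-((starRingEnd ℂ) (a i) * w i)) * h1

lemma cinner_smul_left (a : ℂ) (x y : (Fin n → ZMod p) → ℂ) :
    cinner (a • x) y = (starRingEnd ℂ) a * cinner x y := by
  unfold cinner
  rw [Finset.mul_sum]
  exact Finset.sum_congr rfl fun i _ => by
    simp only [Pi.smul_apply, smul_eq_mul, _root_.map_mul]; ring

lemma cinner_smul_right (a : ℂ) (x y : (Fin n → ZMod p) → ℂ) :
    cinner x (a • y) = a * cinner x y := by
  unfold cinner
  rw [Finset.mul_sum]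
  exact Finset.sum_congr rfl fun i _ => by
    simp only [Pi.smul_apply, smul_eq_mul]; ring

lemma cinner_sum_left {ι : Type*} (s : Finset ι) (f : ι → (Fin n → ZMod p) → ℂ)
    (y : (Fin n → ZMod p) → ℂ) :
    cinner (∑ i ∈ s, f i) y = ∑ i ∈ s, cinner (f i) y := by
  unfold cinner
  rw [Finset.sum_comm]
  exact Finset.sum_congr rfl fun j _ => by
    rw [Finset.sum_apply, map_sum, Finset.sum_mul]

lemma cinner_sum_right {ι : Type*} (s : Finset ι) (x : (Fin n → ZMod p) → ℂ)
    (f : ι → (Fin n → ZMod p) → ℂ) :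
    cinner x (∑ i ∈ s, f i) = ∑ i ∈ s, cinner x (f i) := by
  unfold cinner
  rw [Finset.sum_comm]
  exact Finset.sum_congr rfl fun j _ => by
    rw [Finset.sum_apply, Finset.mul_sum]

lemma mulVec_sum {ι : Type*} (s : Finset ι) (M : Matrix (Fin n → ZMod p) (Fin n → ZMod p) ℂ)
    (f : ι → (Fin n → ZMod p) → ℂ) :
    M *ᵥ (∑ i ∈ s, f i) = ∑ i ∈ s, M *ᵥ f i := by
  funext j
  show (∑ i, M j i * (∑ a ∈ s, f a) i) = (∑ a ∈ s, M *ᵥ f a) j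
  simp only [Finset.sum_apply, Finset.mul_sum, Matrix.mulVec, dotProduct]
  exact Finset.sum_comm

end Pauli

section Duality

variable (p n : ℕ) [Fact p.Prime]

lemma symp_add_left (u v w : Fin n → ZMod p × ZMod p) :
    symp p n (u + v) w = symp p n u w + symp p n v w := by
  have h := symp_add_right (p := p) (n := n) w u v
  have h1 := symp_skew (u + v) w
  have h2 := symp_skew u w
  have h3 := symp_skew v w
  linear_combination h1 - h - h2 - h3

lemma symp_smul_left (a : ZMod p) (u w : Fin n → ZMod p × ZMod p) :
    symp p n (a • u) w = a * symp p n u w := by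
  unfold symp
  rw [Finset.mul_sum]
  exact Finset.sum_congr rfl fun t _ => by
    show ((a • u t).2) * (w t).1 - ((a • u t).1) * (w t).2 = _
    rw [Prod.smul_snd, Prod.smul_fst, smul_eq_mul, smul_eq_mul]; ring

lemma symp_smul_right (a : ZMod p) (u w : Fin n → ZMod p × ZMod p) :
    symp p n u (a • w) = a * symp p n u w := by
  have h1 := symp_skew u (a • w)
  have h2 := symp_smul_left (p := p) (n := n) a w u
  have h3 := symp_skew w u
  linear_combination h1 - h2 - a * h3

noncomputable def sympForm : LinearMap.BilinForm (ZMod p) (Fin n → ZMod p × ZMod p) :=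
  LinearMap.mk₂ (ZMod p) (symp p n)
    (fun u v w => symp_add_left p n u v w)
    (fun a u w => by rw [symp_smul_left, smul_eq_mul])
    (fun u v w => symp_add_right u v w)
    (fun a u w => by rw [symp_smul_right, smul_eq_mul])

@[simp] lemma sympForm_apply (u v : Fin n → ZMod p × ZMod p) :
    sympForm p n u v = symp p n u v := rfl

lemma symp_single (c : Fin n → ZMod p × ZMod p) (t : Fin n) (ab : ZMod p × ZMod p) :
    symp p n c (Pi.single t ab) = (c t).2 * ab.1 - (c t).1 * ab.2 := by
  unfold symp
  rw [Finset.sum_eq_single t]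
  · rw [Pi.single_eq_same]
  · intro s _ hs
    rw [Pi.single_eq_of_ne hs]
    simp
  · intro h; exact absurd (Finset.mem_univ _) h

lemma sympForm_refl : (sympForm p n).IsRefl := by
  intro u v h
  simp only [sympForm_apply] at h ⊢
  rw [symp_skew, h, neg_zero]

lemma sympForm_nondeg : (sympForm p n).Nondegenerate := by
  refine (LinearMap.IsRefl.nondegenerate_iff_separatingLeft (sympForm_refl p n)).mpr ?_
  intro c hc
  funext t
  have h1 := hc (Pi.single t ((0 : ZMod p), (1 : ZMod p)))
  have h2 := hc (Pi.single t ((1 : ZMod p), (0 : ZMod p)))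
  rw [sympForm_apply, symp_single] at h1 h2
  simp only [mul_one, mul_zero, zero_sub, sub_zero, neg_eq_zero] at h1 h2
  show c t = (0, 0)
  exact Prod.ext h1 h2

lemma orth_orth (W : Submodule (ZMod p) (Fin n → ZMod p × ZMod p)) :
    (sympForm p n).orthogonal ((sympForm p n).orthogonal W) = W :=
  LinearMap.BilinForm.orthogonal_orthogonal (sympForm_nondeg p n) (sympForm_refl p n) W

end Duality

/-- In the badcodeword construction: for every `e ∈ C_max \ C`,
`⟨ψ2, XZ(e)ψ2⟩ = 0`. -/
theorem badcodeword_psi2_orth (p n k : ℕ) [Fact p.Prime]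
    (C Cmax : Submodule (ZMod p) (Fin n → ZMod p × ZMod p))
    (hkn : k ≤ n)
    (hdimC : Module.finrank (ZMod p) C = n - k)
    (hCself : ∀ u ∈ C, ∀ c ∈ C, symp p n c u = 0)
    (hCsub : C ≤ Cmax)
    (hsub : ∀ u ∈ Cmax, ∀ c ∈ C, symp p n c u = 0)
    (hmax : ∀ u, u ∈ Cmax ↔ ∀ c ∈ Cmax, symp p n c u = 0)
    (ψ1 : (Fin n → ZMod p) → ℂ) (hψ1 : cinner ψ1 ψ1 = 1)
    (heig : ∀ c ∈ Cmax, ∃ lam : ℂ, XZ p n c *ᵥ ψ1 = lam • ψ1)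
    (R : Finset (Fin n → ZMod p × ZMod p)) (h0R : 0 ∈ R)
    (hRsub : ∀ x ∈ R, ∀ c ∈ C, symp p n c x = 0)
    (hRrep : ∀ v : Fin n → ZMod p × ZMod p, (∀ c ∈ C, symp p n c v = 0) →
      ∃! x, x ∈ R ∧ v - x ∈ Cmax)
    (ψ2 : (Fin n → ZMod p) → ℂ)
    (hψ2 : ψ2 = ((Real.sqrt (p ^ k) : ℝ) : ℂ)⁻¹ • ∑ x ∈ R, XZ p n x *ᵥ ψ1)
    (e : Fin n → ZMod p × ZMod p) (heMax : e ∈ Cmax) (heC : e ∉ C) :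
    cinner ψ2 (XZ p n e *ᵥ ψ2) = 0 := by
  classical
  -- Step 1: ⟨ψ1, XZ(u) ψ1⟩ = 0 for u ∉ Cmax
  have Ivanish : ∀ u, u ∉ Cmax → cinner ψ1 (XZ p n u *ᵥ ψ1) = 0 := by
    intro u hu
    have hnot : ¬ ∀ c ∈ Cmax, symp p n c u = 0 := fun h => hu ((hmax u).mpr h)
    push_neg at hnot
    obtain ⟨c, hcM, hcu⟩ := hnot
    obtain ⟨lam, hlam⟩ := heig c hcM
    have hunit : (starRingEnd ℂ) lam * lam = 1 := by
      have h1 := cinner_XZ_XZ c ψ1 ψ1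
      rw [hlam, cinner_smul_left, cinner_smul_right, hψ1, mul_one] at h1
      exact h1
    have hlam0 : lam ≠ 0 := by
      intro h; rw [h, mul_zero] at hunit; exact zero_ne_one hunit
    have hstep : ∀ w, cinner ψ1 (XZ p n c *ᵥ w) = lam * cinner ψ1 w := by
      intro w
      have h2 := cinner_XZ_XZ c ψ1 w
      rw [hlam, cinner_smul_left] at h2
      linear_combination lam * h2 - cinner ψ1 (XZ p n c *ᵥ w) * hunit
    have hb : XZ p n u *ᵥ (XZ p n c *ᵥ ψ1)
        = chi p (symp p n u c) • (XZ p n c *ᵥ (XZ p n u *ᵥ ψ1)) := by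
      rw [XZ_XZ_mulVec, XZ_XZ_mulVec, add_comm c u, smul_smul, ← chi_add]
      congr 2
      rw [symp_eq_Bf]
      ring
    have hE1 : cinner ψ1 (XZ p n u *ᵥ (XZ p n c *ᵥ ψ1))
        = lam * cinner ψ1 (XZ p n u *ᵥ ψ1) := by
      rw [hlam, Matrix.mulVec_smul, cinner_smul_right]
    have hE2 : cinner ψ1 (XZ p n u *ᵥ (XZ p n c *ᵥ ψ1))
        = chi p (symp p n u c) * (lam * cinner ψ1 (XZ p n u *ᵥ ψ1)) := by
      rw [hb, cinner_smul_right, hstep]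
    have h3 : (1 - chi p (symp p n u c)) * (lam * cinner ψ1 (XZ p n u *ᵥ ψ1)) = 0 := by
      linear_combination hE1.symm.trans hE2
    have hchi : chi p (symp p n u c) ≠ 1 := by
      intro h
      have h0 : symp p n u c = 0 := (chi_eq_one_iff p _).mp h
      exact hcu (by rw [symp_skew c u, h0, neg_zero])
    rcases mul_eq_zero.mp h3 with h | h
    · exact absurd (by linear_combination -h) hchi
    · rcases mul_eq_zero.mp h with h' | h'
      · exact absurd h' hlam0
      · exact h'
  -- Step 2: existence of z ∈ C^⊥ with symp e z ≠ 0
  have hent : ∃ z, (∀ c ∈ C, symp p n c z = 0) ∧ symp p n e z ≠ 0 := by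
    by_contra hcon
    push_neg at hcon
    apply heC
    have horth : e ∈ (sympForm p n).orthogonal ((sympForm p n).orthogonal C) := by
      rw [LinearMap.BilinForm.mem_orthogonal_iff]
      intro z hz
      have hz' : ∀ c ∈ C, symp p n c z = 0 := by
        intro c hc
        exact (LinearMap.BilinForm.mem_orthogonal_iff.mp hz) c hc
      show sympForm p n z e = 0
      rw [sympForm_apply, symp_skew z e, hcon z hz', neg_zero]
    rwa [orth_orth p n C] at horth
  obtain ⟨z, hzC, hez⟩ := hent
  -- Step 3: the coset-representative map and the shift bijection
  set rep : (Fin n → ZMod p × ZMod p) → (Fin n → ZMod p × ZMod p) := fun v =>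
    if hv : ∀ c ∈ C, symp p n c v = 0 then (hRrep v hv).choose else 0 with hrep_def
  have rep_mem : ∀ v, (∀ c ∈ C, symp p n c v = 0) → rep v ∈ R ∧ v - rep v ∈ Cmax := by
    intro v hv
    rw [hrep_def]
    simp only [dif_pos hv]
    exact (hRrep v hv).choose_spec.1
  have rep_uniq : ∀ v, (∀ c ∈ C, symp p n c v = 0) →
      ∀ x, x ∈ R → v - x ∈ Cmax → x = rep v := by
    intro v hv x hxR hxc
    rw [hrep_def]
    simp only [dif_pos hv]
    exact (hRrep v hv).choose_spec.2 x ⟨hxR, hxc⟩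
  have hmemz : ∀ x ∈ R, ∀ c ∈ C, symp p n c (x + z) = 0 := by
    intro x hx c hc
    rw [symp_add_right, hRsub x hx c hc, hzC c hc, add_zero]
  have hmemz' : ∀ x ∈ R, ∀ c ∈ C, symp p n c (x - z) = 0 := by
    intro x hx c hc
    rw [symp_sub_right, hRsub x hx c hc, hzC c hc, sub_zero]
  set σ : (Fin n → ZMod p × ZMod p) → (Fin n → ZMod p × ZMod p) := fun x => rep (x + z)
    with hσdef
  set τ : (Fin n → ZMod p × ZMod p) → (Fin n → ZMod p × ZMod p) := fun x => rep (x - z)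
    with hτdef
  have hσR : ∀ x ∈ R, σ x ∈ R := fun x hx => (rep_mem _ (hmemz x hx)).1
  have hσc : ∀ x ∈ R, (x + z) - σ x ∈ Cmax := fun x hx => (rep_mem _ (hmemz x hx)).2
  have hτR : ∀ x ∈ R, τ x ∈ R := fun x hx => (rep_mem _ (hmemz' x hx)).1
  have hτc : ∀ x ∈ R, (x - z) - τ x ∈ Cmax := fun x hx => (rep_mem _ (hmemz' x hx)).2
  have hτσ : ∀ x ∈ R, τ (σ x) = x := by
    intro x hx
    have h1 : (σ x - z) - x ∈ Cmax := by
      have h2 := Cmax.neg_mem (hσc x hx)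
      have heq : -((x + z) - σ x) = (σ x - z) - x := by abel
      rwa [heq] at h2
    exact (rep_uniq (σ x - z) (hmemz' (σ x) (hσR x hx)) x hx h1).symm
  have hστ : ∀ x ∈ R, σ (τ x) = x := by
    intro x hx
    have h1 : (τ x + z) - x ∈ Cmax := by
      have h2 := Cmax.neg_mem (hτc x hx)
      have heq : -((x - z) - τ x) = (τ x + z) - x := by abel
      rwa [heq] at h2
    exact (rep_uniq (τ x + z) (hmemz (τ x) (hτR x hx)) x hx h1).symm
  have hsymp_shift : ∀ x ∈ R, symp p n e (σ x) = symp p n e x + symp p n e z := by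
    intro x hx
    have hw : symp p n e ((x + z) - σ x) = 0 := (hmax _).mp (hσc x hx) e heMax
    rw [symp_sub_right, symp_add_right] at hw
    linear_combination -hw
  -- Step 4: the character sum over R vanishes
  have hS : (∑ x ∈ R, chi p (symp p n e x)) = 0 := by
    have hre : (∑ x ∈ R, chi p (symp p n e (σ x))) = ∑ x ∈ R, chi p (symp p n e x) :=
      Finset.sum_nbij' σ τ hσR hτR hτσ hστ (fun a _ => rfl)
    have hre2 : (∑ x ∈ R, chi p (symp p n e (σ x)))
        = chi p (symp p n e z) * ∑ x ∈ R, chi p (symp p n e x) := by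
      rw [Finset.mul_sum]
      refine Finset.sum_congr rfl fun x hx => ?_
      rw [hsymp_shift x hx, chi_add]
      exact mul_comm _ _
    have hc1 : chi p (symp p n e z) ≠ 1 := fun h => hez ((chi_eq_one_iff p _).mp h)
    have h4 : (1 - chi p (symp p n e z)) * (∑ x ∈ R, chi p (symp p n e x)) = 0 := by
      linear_combination hre.symm.trans hre2
    rcases mul_eq_zero.mp h4 with h | h
    · exact absurd (by linear_combination -h) hc1
    · exact h
  -- Step 5: the generic term computation
  have Tlem : ∀ x y : Fin n → ZMod p × ZMod p,
      cinner (XZ p n x *ᵥ ψ1) (XZ p n e *ᵥ (XZ p n y *ᵥ ψ1))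
      = chi p (Bf p n e y - Bf p n x (e + y - x)) * cinner ψ1 (XZ p n (e + y - x) *ᵥ ψ1) := by
    intro x y
    have hsum : x + (e + y - x) = e + y := by abel
    have h1 : XZ p n e *ᵥ (XZ p n y *ᵥ ψ1)
        = (chi p (Bf p n e y) * (chi p (Bf p n x (e + y - x)))⁻¹)
            • (XZ p n x *ᵥ (XZ p n (e + y - x) *ᵥ ψ1)) := by
      rw [XZ_XZ_mulVec, XZ_XZ_mulVec, hsum, smul_smul, mul_assoc,
        inv_mul_cancel₀ (chi_ne_zero p _), mul_one]
    rw [h1, cinner_smul_right, cinner_XZ_XZ, chi_inv, ← chi_add, ← sub_eq_add_neg]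
  -- Step 6: off-diagonal terms vanish
  have hoff : ∀ x ∈ R, ∀ y ∈ R, y ≠ x → (e + y - x) ∉ Cmax := by
    intro x hx y hy hyx hmem
    have hyx' : y - x ∈ Cmax := by
      have h2 := Cmax.sub_mem hmem heMax
      have heq : (e + y - x) - e = y - x := by abel
      rwa [heq] at h2
    have hyC : ∀ c ∈ C, symp p n c y = 0 := hRsub y hy
    exact hyx (ExistsUnique.unique (hRrep y hyC)
      ⟨hy, by rw [sub_self]; exact Cmax.zero_mem⟩ ⟨hx, hyx'⟩)
  -- Step 7: row sums
  have hrow : ∀ x ∈ R,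
      (∑ y ∈ R, cinner (XZ p n x *ᵥ ψ1) (XZ p n e *ᵥ (XZ p n y *ᵥ ψ1)))
      = chi p (symp p n e x) * cinner ψ1 (XZ p n e *ᵥ ψ1) := by
    intro x hx
    rw [Finset.sum_eq_single x]
    · rw [Tlem x x, show e + x - x = e from by abel, ← symp_eq_Bf]
    · intro y hy hyx
      rw [Tlem x y, Ivanish _ (hoff x hx y hy hyx), mul_zero]
    · intro h; exact absurd hx h
  -- Step 8: assemble
  rw [hψ2, Matrix.mulVec_smul, _root_.mulVec_sum, cinner_smul_left, cinner_smul_right,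
    cinner_sum_left]
  have hmain : (∑ x ∈ R, cinner (XZ p n x *ᵥ ψ1)
      (∑ y ∈ R, XZ p n e *ᵥ (XZ p n y *ᵥ ψ1))) = 0 := by
    have hterm : ∀ x ∈ R, cinner (XZ p n x *ᵥ ψ1)
        (∑ y ∈ R, XZ p n e *ᵥ (XZ p n y *ᵥ ψ1))
        = chi p (symp p n e x) * cinner ψ1 (XZ p n e *ᵥ ψ1) := by
      intro x hx
      rw [cinner_sum_right]
      exact hrow x hx
    rw [Finset.sum_congr rfl hterm, ← Finset.sum_mul, hS, zero_mul]
  rw [hmain, mul_zero, mul_zero]
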